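/- For every n ≥ 1, the tensor rank of |W⟩^{⊗n} (regrouped as a tripartite vector) is at most 7^{n/2} when n is even, and at most 3·7^{(n−1)/2} when n is odd. -/

import Mathlib

open TensorProduct

/-- Tripartite tensor rank: minimal number of product vectors summing to `ψ`. -/
noncomputable def tRank {A B C : Type*} [AddCommGroup A] [Module ℂ A]
    [AddCommGroup B] [Module ℂ B] [AddCommGroup C] [Module ℂ C]
    (ψ : A ⊗[ℂ] (B ⊗[ℂ] C)) : ℕ :=
  sInf {r | ∃ (a : Fin r → A) (b : Fin r → B) (c : Fin r → C),
    ψ = ∑ i, a i ⊗ₜ[ℂ] (b i ⊗ₜ[ℂ] c i)}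

/-- `(ℂ²)^{⊗n}`, realized as functions on `n`-bit strings. -/
abbrev V (n : ℕ) : Type := (Fin n → Bool) → ℂ

/-- the computational-basis vector `|s⟩` of `n` qubits. -/
noncomputable def qb {n : ℕ} (s : Fin n → Bool) : V n := Pi.single s 1

/-- `W^{⊗n}` regrouped party-wise: in copy `k` the excitation goes to party `f k`. -/
noncomputable def Wn (n : ℕ) : V n ⊗[ℂ] (V n ⊗[ℂ] V n) :=
  ∑ f : Fin n → Fin 3,
    qb (fun k => decide (f k = 0)) ⊗ₜ[ℂ]
      (qb (fun k => decide (f k = 1)) ⊗ₜ[ℂ] qb (fun k => decide (f k = 2)))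

/-- `GHZ^{⊗n}` regrouped party-wise: `∑ₓ |x⟩|x⟩|x⟩`. -/
noncomputable def GHZn (n : ℕ) : V n ⊗[ℂ] (V n ⊗[ℂ] V n) :=
  ∑ x : Fin n → Bool, qb x ⊗ₜ[ℂ] (qb x ⊗ₜ[ℂ] qb x)

set_option maxHeartbeats 1000000

namespace WnAux

/-- embedding of the first `m` qubits into `m+n` qubits, as functions. -/
noncomputable def e1 (m n : ℕ) : V m →ₗ[ℂ] V (m + n) :=
  LinearMap.funLeft ℂ ℂ (fun x k => x (Fin.castAdd n k))

/-- embedding of the last `n` qubits into `m+n` qubits, as functions. -/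
noncomputable def e2 (m n : ℕ) : V n →ₗ[ℂ] V (m + n) :=
  LinearMap.funLeft ℂ ℂ (fun x k => x (Fin.natAdd m k))

lemma e1_mul_e2_qb {m n : ℕ} (s : Fin m → Bool) (t : Fin n → Bool) :
    e1 m n (qb s) * e2 m n (qb t) = qb (Fin.append s t) := by
  funext x
  simp only [e1, e2, Pi.mul_apply, LinearMap.funLeft_apply, qb]
  rcases eq_or_ne x (Fin.append s t) with h | h
  · subst h
    have h1 : (fun k => Fin.append s t (Fin.castAdd n k)) = s :=
      funext fun k => Fin.append_left s t k
    have h2 : (fun k => Fin.append s t (Fin.natAdd m k)) = t :=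
      funext fun k => Fin.append_right s t k
    rw [h1, h2, Pi.single_eq_same, Pi.single_eq_same, Pi.single_eq_same, one_mul]
  · have hor : ((fun k => x (Fin.castAdd n k)) ≠ s) ∨ ((fun k => x (Fin.natAdd m k)) ≠ t) := by
      by_contra hc
      push_neg at hc
      apply h
      funext i
      refine Fin.addCases (fun i => ?_) (fun i => ?_) i
      · rw [Fin.append_left]; exact congrFun hc.1 i
      · rw [Fin.append_right]; exact congrFun hc.2 i
    rw [Pi.single_eq_of_ne h]
    rcases hor with hh | hh
    · rw [Pi.single_eq_of_ne hh, zero_mul]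
    · rw [Pi.single_eq_of_ne hh, mul_zero]

lemma decide_append {m n : ℕ} (f : Fin m → Fin 3) (g : Fin n → Fin 3) (j : Fin 3) :
    (fun k => decide (Fin.append f g k = j)) =
      Fin.append (fun k => decide (f k = j)) (fun k => decide (g k = j)) := by
  funext i
  refine Fin.addCases (fun i => ?_) (fun i => ?_) i <;>
    simp [Fin.append_left, Fin.append_right]

/-- the induced embedding on triple tensor products (first block). -/
noncomputable def L1 (m n : ℕ) :
    V m ⊗[ℂ] (V m ⊗[ℂ] V m) →ₗ[ℂ] V (m + n) ⊗[ℂ] (V (m + n) ⊗[ℂ] V (m + n)) :=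
  TensorProduct.map (e1 m n) (TensorProduct.map (e1 m n) (e1 m n))

/-- the induced embedding on triple tensor products (second block). -/
noncomputable def L2 (m n : ℕ) :
    V n ⊗[ℂ] (V n ⊗[ℂ] V n) →ₗ[ℂ] V (m + n) ⊗[ℂ] (V (m + n) ⊗[ℂ] V (m + n)) :=
  TensorProduct.map (e2 m n) (TensorProduct.map (e2 m n) (e2 m n))

lemma L1_mul_L2 {m n : ℕ} (x y z : V m) (x' y' z' : V n) :
    L1 m n (x ⊗ₜ[ℂ] (y ⊗ₜ[ℂ] z)) * L2 m n (x' ⊗ₜ[ℂ] (y' ⊗ₜ[ℂ] z')) =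
      (e1 m n x * e2 m n x') ⊗ₜ[ℂ]
        ((e1 m n y * e2 m n y') ⊗ₜ[ℂ] (e1 m n z * e2 m n z')) := by
  simp [L1, L2, Algebra.TensorProduct.tmul_mul_tmul]

lemma Wn_split (m n : ℕ) : Wn (m + n) = L1 m n (Wn m) * L2 m n (Wn n) := by
  have key : ∀ (f : Fin m → Fin 3) (g : Fin n → Fin 3),
      (L1 m n (qb (fun k => decide (f k = 0)) ⊗ₜ[ℂ]
        (qb (fun k => decide (f k = 1)) ⊗ₜ[ℂ] qb (fun k => decide (f k = 2))))) *
      (L2 m n (qb (fun k => decide (g k = 0)) ⊗ₜ[ℂ]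
        (qb (fun k => decide (g k = 1)) ⊗ₜ[ℂ] qb (fun k => decide (g k = 2))))) =
      qb (fun k => decide (Fin.append f g k = 0)) ⊗ₜ[ℂ]
        (qb (fun k => decide (Fin.append f g k = 1)) ⊗ₜ[ℂ]
          qb (fun k => decide (Fin.append f g k = 2))) := by
    intro f g
    rw [L1_mul_L2, e1_mul_e2_qb, e1_mul_e2_qb, e1_mul_e2_qb,
      decide_append f g 0, decide_append f g 1, decide_append f g 2]
  rw [Wn, Wn, Wn, map_sum, map_sum,
    Fintype.sum_mul_sum (fun f : Fin m → Fin 3 => (L1 m n) (qb (fun k => decide (f k = 0)) ⊗ₜ[ℂ]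
        (qb (fun k => decide (f k = 1)) ⊗ₜ[ℂ] qb (fun k => decide (f k = 2)))))
      (fun g : Fin n → Fin 3 => (L2 m n) (qb (fun k => decide (g k = 0)) ⊗ₜ[ℂ]
        (qb (fun k => decide (g k = 1)) ⊗ₜ[ℂ] qb (fun k => decide (g k = 2)))))]
  rw [← Equiv.sum_comp (Fin.appendEquiv m n)
    (fun h : Fin (m + n) → Fin 3 => qb (fun k => decide (h k = 0)) ⊗ₜ[ℂ]
      (qb (fun k => decide (h k = 1)) ⊗ₜ[ℂ] qb (fun k => decide (h k = 2))))]
  rw [Fintype.sum_prod_type]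
  refine Finset.sum_congr rfl fun f _ => Finset.sum_congr rfl fun g _ => ?_
  simp only [Fin.appendEquiv_apply]
  exact (key f g).symm

/-- `Wn n` admits a decomposition into `r` product terms. -/
def Decomp (n r : ℕ) : Prop :=
  ∃ (a b c : Fin r → V n), Wn n = ∑ i, a i ⊗ₜ[ℂ] (b i ⊗ₜ[ℂ] c i)

lemma Decomp.mul {m n r s : ℕ} (h1 : Decomp m r) (h2 : Decomp n s) :
    Decomp (m + n) (r * s) := by
  obtain ⟨a, b, c, h1⟩ := h1
  obtain ⟨a', b', c', h2⟩ := h2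
  refine ⟨fun q => e1 m n (a (finProdFinEquiv.symm q).1) * e2 m n (a' (finProdFinEquiv.symm q).2),
    fun q => e1 m n (b (finProdFinEquiv.symm q).1) * e2 m n (b' (finProdFinEquiv.symm q).2),
    fun q => e1 m n (c (finProdFinEquiv.symm q).1) * e2 m n (c' (finProdFinEquiv.symm q).2), ?_⟩
  rw [Wn_split, h1, h2, map_sum, map_sum,
    Fintype.sum_mul_sum (fun x : Fin r => (L1 m n) (a x ⊗ₜ[ℂ] (b x ⊗ₜ[ℂ] c x)))
      (fun x : Fin s => (L2 m n) (a' x ⊗ₜ[ℂ] (b' x ⊗ₜ[ℂ] c' x)))]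
  refine Eq.trans (Fintype.sum_prod_type (f := fun p : Fin r × Fin s =>
      (L1 m n) (a p.1 ⊗ₜ[ℂ] (b p.1 ⊗ₜ[ℂ] c p.1)) *
      (L2 m n) (a' p.2 ⊗ₜ[ℂ] (b' p.2 ⊗ₜ[ℂ] c' p.2)))).symm ?_
  refine Fintype.sum_equiv finProdFinEquiv _ _ fun p => ?_
  simp only [L1_mul_L2, Equiv.symm_apply_apply]

lemma decomp_one : Decomp 1 3 := by
  refine ⟨fun i => qb (fun _ => decide (i = 0)), fun i => qb (fun _ => decide (i = 1)),
    fun i => qb (fun _ => decide (i = 2)), ?_⟩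
  rw [Wn, ← Equiv.sum_comp ((Equiv.funUnique (Fin 1) (Fin 3)).symm)
    (fun f : Fin 1 → Fin 3 => qb (fun k => decide (f k = 0)) ⊗ₜ[ℂ]
      (qb (fun k => decide (f k = 1)) ⊗ₜ[ℂ] qb (fun k => decide (f k = 2))))]
  rfl

lemma decomp_two : Decomp 2 7 := by
  classical
  have hsum : Wn 2 = ∑ p : Fin 3 × Fin 3,
      qb ![decide (p.1 = 0), decide (p.2 = 0)] ⊗ₜ[ℂ]
        (qb ![decide (p.1 = 1), decide (p.2 = 1)] ⊗ₜ[ℂ]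
          qb ![decide (p.1 = 2), decide (p.2 = 2)]) := by
    rw [Wn, ← Equiv.sum_comp ((piFinTwoEquiv (fun _ => Fin 3)).symm)
      (fun f : Fin 2 → Fin 3 => qb (fun k => decide (f k = 0)) ⊗ₜ[ℂ]
        (qb (fun k => decide (f k = 1)) ⊗ₜ[ℂ] qb (fun k => decide (f k = 2))))]
    refine Finset.sum_congr rfl fun p _ => ?_
    have hq : ∀ j : Fin 3, (fun k => decide ((piFinTwoEquiv (fun _ => Fin 3)).symm p k = j)) =
        ![decide (p.1 = j), decide (p.2 = j)] := by
      intro j; funext k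
      fin_cases k <;> rfl
    rw [hq 0, hq 1, hq 2]
  refine ⟨Fin.cons ((2⁻¹ : ℂ) • (qb ![false, false] + qb ![true, true]))
      (Fin.cons (-((2⁻¹ : ℂ) • (qb ![false, false] - qb ![true, true])))
      (Fin.cons (-(qb ![true, true]))
      (Fin.cons ((4⁻¹ : ℂ) • (qb ![false, false] + qb ![true, false] + qb ![false, true]))
      (Fin.cons (-((4⁻¹ : ℂ) • (qb ![false, false] + qb ![true, false] - qb ![false, true])))
      (Fin.cons (-((4⁻¹ : ℂ) • (qb ![false, false] - qb ![true, false] + qb ![false, true])))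
      (Fin.cons ((4⁻¹ : ℂ) • (qb ![false, false] - qb ![true, false] - qb ![false, true]))
        Fin.elim0)))))),
    Fin.cons (qb ![false, false] + qb ![true, true])
      (Fin.cons (qb ![false, false] - qb ![true, true])
      (Fin.cons (qb ![true, true])
      (Fin.cons (qb ![false, false] + qb ![true, false] + qb ![false, true])
      (Fin.cons (qb ![false, false] + qb ![true, false] - qb ![false, true])
      (Fin.cons (qb ![false, false] - qb ![true, false] + qb ![false, true])
      (Fin.cons (qb ![false, false] - qb ![true, false] - qb ![false, true])
        Fin.elim0)))))),
    Fin.cons (qb ![false, false] + qb ![true, true])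
      (Fin.cons (qb ![false, false] - qb ![true, true])
      (Fin.cons (qb ![true, true])
      (Fin.cons (qb ![false, false] + qb ![true, false] + qb ![false, true])
      (Fin.cons (qb ![false, false] + qb ![true, false] - qb ![false, true])
      (Fin.cons (qb ![false, false] - qb ![true, false] + qb ![false, true])
      (Fin.cons (qb ![false, false] - qb ![true, false] - qb ![false, true])
        Fin.elim0)))))), ?_⟩
  rw [hsum]
  simp only [Fintype.sum_prod_type, Fin.sum_univ_three, Fin.sum_univ_succ, Fin.sum_univ_zero,
    Fin.cons_zero, Fin.cons_succ, add_zero,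
    Fin.succ_zero_eq_one, Fin.succ_one_eq_two, decide_true, decide_false,
    show (decide ((0 : Fin 3) = 0)) = true from rfl,
    show (decide ((1 : Fin 3) = 0)) = false from rfl,
    show (decide ((2 : Fin 3) = 0)) = false from rfl,
    show (decide ((0 : Fin 3) = 1)) = false from rfl,
    show (decide ((1 : Fin 3) = 1)) = true from rfl,
    show (decide ((2 : Fin 3) = 1)) = false from rfl,
    show (decide ((0 : Fin 3) = 2)) = false from rfl,
    show (decide ((1 : Fin 3) = 2)) = false from rfl,
    show (decide ((2 : Fin 3) = 2)) = true from rfl]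
  simp only [smul_add, smul_sub, TensorProduct.tmul_add, TensorProduct.add_tmul,
    TensorProduct.tmul_sub, TensorProduct.sub_tmul, TensorProduct.neg_tmul,
    TensorProduct.tmul_neg, ← TensorProduct.smul_tmul', TensorProduct.tmul_smul, smul_smul]
  module

/-- the bound in the theorem. -/
def bound (n : ℕ) : ℕ := if Even n then 7 ^ (n / 2) else 3 * 7 ^ ((n - 1) / 2)

lemma bound_one : bound 1 = 3 := by norm_num [bound]

lemma bound_two : bound 2 = 7 := by norm_num [bound]

lemma bound_step (n : ℕ) : bound (n + 2) = bound n * 7 := by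
  rcases Nat.even_or_odd n with h | h
  · have h2 : Even (n + 2) := by
      rcases h with ⟨k, hk⟩; exact ⟨k + 1, by omega⟩
    rw [bound, bound, if_pos h2, if_pos h,
      show (n + 2) / 2 = n / 2 + 1 by omega, pow_succ]
  · have h1 : ¬ Even n := Nat.not_even_iff_odd.mpr h
    have h2 : ¬ Even (n + 2) := by
      intro hc; apply h1
      rcases hc with ⟨k, hk⟩; exact ⟨k - 1, by omega⟩
    have hn1 : 1 ≤ n := by
      rcases h with ⟨k, hk⟩; omega
    rw [bound, bound, if_neg h2, if_neg h1,
      show (n + 2 - 1) / 2 = (n - 1) / 2 + 1 by omega, pow_succ, mul_assoc]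

lemma decomp_bound : ∀ n : ℕ, Decomp (n + 1) (bound (n + 1)) := by
  intro n
  induction n using Nat.strong_induction_on with
  | _ n ih =>
    match n, ih with
    | 0, _ => exact bound_one ▸ decomp_one
    | 1, _ => exact bound_two ▸ decomp_two
    | (k + 2), ih =>
      have h := (ih k (by omega)).mul decomp_two
      rw [bound_step (k + 1)]
      exact h

end WnAux

theorem rank_Wn_upper_bound (n : ℕ) (hn : 1 ≤ n) :
    tRank (Wn n) ≤ if Even n then 7 ^ (n / 2) else 3 * 7 ^ ((n - 1) / 2) := by
  obtain ⟨m, rfl⟩ : ∃ m, n = m + 1 := ⟨n - 1, by omega⟩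
  obtain ⟨a, b, c, h⟩ := WnAux.decomp_bound m
  have hle : tRank (Wn (m + 1)) ≤ WnAux.bound (m + 1) :=
    Nat.sInf_le ⟨a, b, c, h⟩
  simpa only [WnAux.bound] using hle
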